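/- Let Z₁,…,Zₘ be positive reals, and for a threshold C with both groups {Zᵢ : Zᵢ ≤ C} and {Zᵢ : Zᵢ > C} nonempty, define g(C) = (m₁m₂/m²)|Z̄₁ − Z̄₂| where m₁, m₂ are group sizes and Z̄₁, Z̄₂ group means. Then g is maximized (among thresholds producing the same possible partitions) at C = (1/m)Σᵢ Zᵢ. -/

import Mathlib

open Finset

/-- The group of indices with observation `≤ C`. -/
noncomputable def lowGroup {m : ℕ} (Z : Fin m → ℝ) (C : ℝ) : Finset (Fin m) :=
  Finset.univ.filter (fun i => Z i ≤ C)

/-- The group of indices with observation `> C`. -/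
noncomputable def highGroup {m : ℕ} (Z : Fin m → ℝ) (C : ℝ) : Finset (Fin m) :=
  Finset.univ.filter (fun i => C < Z i)

/-- Mean of the observations over a finite set of indices. -/
noncomputable def groupMean {m : ℕ} (Z : Fin m → ℝ) (s : Finset (Fin m)) : ℝ :=
  (∑ i ∈ s, Z i) / s.card

/-- The between-group separation criterion
`g(C) = (m₁m₂/m²)|Z̄₁ − Z̄₂|` induced by threshold `C`. -/
noncomputable def sepCrit {m : ℕ} (Z : Fin m → ℝ) (C : ℝ) : ℝ :=
  ((lowGroup Z C).card * (highGroup Z C).card / (m : ℝ) ^ 2) *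
    |groupMean Z (lowGroup Z C) - groupMean Z (highGroup Z C)|

lemma highGroup_eq_compl {m : ℕ} (Z : Fin m → ℝ) (C : ℝ) :
    highGroup Z C = (lowGroup Z C)ᶜ := by
  ext i; simp [lowGroup, highGroup, not_le]

lemma sepCrit_eq {m : ℕ} (Z : Fin m → ℝ) (C : ℝ)
    (h1 : (lowGroup Z C).Nonempty) (h2 : (highGroup Z C).Nonempty) :
    sepCrit Z C = |∑ i ∈ lowGroup Z C, ((∑ j, Z j) / m - Z i)| / m := by
  have hmnat : 0 < m := by
    obtain ⟨i, _⟩ := h1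
    exact Fin.pos i
  have hm : (0:ℝ) < m := by exact_mod_cast hmnat
  set s := lowGroup Z C with hs
  have hcompl : highGroup Z C = sᶜ := highGroup_eq_compl Z C
  set S := ∑ j, Z j with hSdef
  set S₁ := ∑ i ∈ s, Z i with hS1
  set a := (s.card : ℝ) with hadef
  set b := ((sᶜ : Finset (Fin m)).card : ℝ) with hbdef
  have ha : 0 < a := by rw [hadef]; exact_mod_cast Finset.card_pos.mpr h1
  have hb : 0 < b := by
    have h : (sᶜ : Finset (Fin m)).Nonempty := hcompl ▸ h2
    rw [hbdef]; exact_mod_cast Finset.card_pos.mpr h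
  have hab : a + b = m := by
    have h := Finset.card_add_card_compl s
    simp only [Fintype.card_fin] at h
    rw [hadef, hbdef]; exact_mod_cast h
  have hS2 : ∑ i ∈ sᶜ, Z i = S - S₁ := by
    have := Finset.sum_add_sum_compl s Z
    rw [hSdef, hS1]; linarith
  set X := ∑ i ∈ s, (S / m - Z i) with hXdef
  have hX : X = a * (S / m) - S₁ := by
    rw [hXdef, Finset.sum_sub_distrib, Finset.sum_const, nsmul_eq_mul, hS1]
  have hgm : groupMean Z s - groupMean Z sᶜ = -((m : ℝ) * X) / (a * b) := by
    unfold groupMean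
    rw [hS2, hX, ← hS1, ← hadef, ← hbdef]
    have hb' : b = (m : ℝ) - a := by linarith
    rw [hb']
    have h1 : a ≠ 0 := ne_of_gt ha
    have h2 : (m : ℝ) - a ≠ 0 := by rw [← hb']; exact ne_of_gt hb
    have h3 : (m : ℝ) ≠ 0 := ne_of_gt hm
    field_simp
    ring
  show ((s.card : ℝ) * ((highGroup Z C).card : ℝ) / (m:ℝ)^2) *
      |groupMean Z s - groupMean Z (highGroup Z C)| = |X| / m
  rw [hcompl, hgm, ← hadef, abs_div, abs_neg, abs_mul, abs_of_pos hm,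
    abs_of_pos (mul_pos ha hb), ← hbdef]
  field_simp

/-- Among thresholds producing two nonempty groups, `g(C) = (m₁m₂/m²)|Z̄₁ − Z̄₂|`
is maximized at `C = (1/m) Σᵢ Zᵢ`, the overall mean. -/
theorem sepCrit_maximized_at_mean {m : ℕ} (Z : Fin m → ℝ) (hZ : ∀ i, 0 < Z i)
    (hlow : (lowGroup Z ((∑ i, Z i) / m)).Nonempty)
    (hhigh : (highGroup Z ((∑ i, Z i) / m)).Nonempty) :
    ∀ C : ℝ, (lowGroup Z C).Nonempty → (highGroup Z C).Nonempty →
      sepCrit Z C ≤ sepCrit Z ((∑ i, Z i) / m) := by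
  intro C hC1 hC2
  have hmnat : 0 < m := by
    obtain ⟨i, _⟩ := hlow
    exact Fin.pos i
  have hm : (0:ℝ) < m := by exact_mod_cast hmnat
  set S := ∑ j, Z j with hSdef
  set μ := S / m with hμ
  set f : Fin m → ℝ := fun i => μ - Z i with hf
  have htot : ∑ i, f i = 0 := by
    rw [hf]
    simp only [Finset.sum_sub_distrib, Finset.sum_const, Finset.card_univ,
      Fintype.card_fin, nsmul_eq_mul, ← hSdef]
    rw [hμ]
    field_simp
    ring
  set t₀ := lowGroup Z μ with ht₀
  have key : ∀ u : Finset (Fin m), ∑ i ∈ u, f i ≤ ∑ i ∈ t₀, f i := by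
    intro u
    have hsplit := Finset.sum_filter_add_sum_filter_not u (fun i => Z i ≤ μ) f
    have h1 : ∑ i ∈ u.filter (fun i => ¬ Z i ≤ μ), f i ≤ 0 := by
      apply Finset.sum_nonpos
      intro i hi
      have := (Finset.mem_filter.mp hi).2
      simp only [hf]
      push_neg at this
      linarith
    have h2 : ∑ i ∈ u.filter (fun i => Z i ≤ μ), f i ≤ ∑ i ∈ t₀, f i := by
      apply Finset.sum_le_sum_of_subset_of_nonneg
      · rw [ht₀]; unfold lowGroup
        exact Finset.filter_subset_filter _ (Finset.subset_univ u)
      · intro i hi _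
        have := (Finset.mem_filter.mp hi).2
        simp only [hf]
        linarith
    linarith
  have habs : |∑ i ∈ lowGroup Z C, f i| ≤ ∑ i ∈ t₀, f i := by
    rw [abs_le]
    constructor
    · have hcompl : ∑ i ∈ (lowGroup Z C)ᶜ, f i = - ∑ i ∈ lowGroup Z C, f i := by
        have := Finset.sum_add_sum_compl (lowGroup Z C) f
        rw [htot] at this
        linarith
      have := key (lowGroup Z C)ᶜ
      rw [hcompl] at this
      linarith
    · exact key _
  have hnonneg : 0 ≤ ∑ i ∈ t₀, f i := by
    apply Finset.sum_nonneg
    intro i hi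
    have : Z i ≤ μ := by
      rw [ht₀] at hi; unfold lowGroup at hi
      exact (Finset.mem_filter.mp hi).2
    simp only [hf]; linarith
  rw [sepCrit_eq Z C hC1 hC2, sepCrit_eq Z μ hlow hhigh]
  have hle : |∑ i ∈ lowGroup Z C, (μ - Z i)| ≤ |∑ i ∈ t₀, (μ - Z i)| := by
    rw [abs_of_nonneg hnonneg]
    exact habs
  gcongr
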